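/- Let G be a graph, M a matching, and suppose u and v are nodes in two vertex-disjoint alternating trees rooted at distinct unmatched roots r_u and r_v, such that u has an even-length alternating path P_u to r_u starting with a matched edge, v has an even-length alternating path P_v to r_v starting with a matched edge, and uv is an edge of G not in M. Then the concatenation reverse(P_u), (u,v), P_v is an M-augmenting path, and augmenting along it yields a matching of size |M| + 1 in which both r_u and r_v become matched. -/

import Mathlib

open Finset

def IsMatchingS {V : Type*} [DecidableEq V] (M : Finset (Sym2 V)) : Prop :=
  (∀ e ∈ M, ¬ e.IsDiag) ∧
  (∀ e ∈ M, ∀ f ∈ M, e ≠ f → ∀ v : V, v ∈ e → v ∉ f)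

def pathEdges {V : Type*} (l : List V) : List (Sym2 V) :=
  List.zipWith (fun a b => s(a, b)) l l.tail

/-- A simple path whose edges lie in `Eg` and alternate w.r.t. the matching `M`;
if `startMatched` is `true` the first edge is matched (edges at even positions are
matched), otherwise the first edge is unmatched. -/
def IsAltPath {V : Type*} [DecidableEq V] (Eg M : Finset (Sym2 V))
    (startMatched : Bool) (l : List V) : Prop :=
  l.Nodup ∧ (∀ e ∈ pathEdges l, e ∈ Eg) ∧
  ∀ i (hi : i < (pathEdges l).length),
    ((pathEdges l)[i]'hi ∈ M ↔ (Even i ↔ startMatched = true))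

set_option maxHeartbeats 1000000
set_option linter.unusedVariables false
set_option linter.unusedSectionVars false
section Aux
variable {V : Type*} [DecidableEq V]

lemma pathEdges_length (l : List V) : (pathEdges l).length = l.length - 1 := by
  simp [pathEdges]

lemma pathEdges_getElem (l : List V) (i : ℕ) (hi : i < (pathEdges l).length) :
    (pathEdges l)[i] = s(l[i]'(by simp [pathEdges_length] at hi; omega),
                         l[i+1]'(by simp [pathEdges_length] at hi; omega)) := by
  simp [pathEdges_length] at hi
  simp [pathEdges, List.getElem_zipWith, List.getElem_tail]

lemma pathEdges_nodup (l : List V) (h : l.Nodup) : (pathEdges l).Nodup := by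
  have hinj : ∀ i j (hi : i < l.length) (hj : j < l.length), l[i] = l[j] → i = j :=
    fun i j hi hj he => (List.Nodup.getElem_inj_iff h).mp he
  rw [List.nodup_iff_injective_get]
  intro ⟨i, hi⟩ ⟨j, hj⟩ hij
  simp only [List.get_eq_getElem, pathEdges_getElem, Sym2.eq, Sym2.rel_iff', Prod.mk.injEq,
    Prod.swap_prod_mk] at hij
  have hi' := hi; have hj' := hj
  simp [pathEdges_length] at hi' hj'
  rcases hij with ⟨h1, h2⟩ | ⟨h1, h2⟩
  · have := hinj _ _ (by omega) (by omega) h1; simpa using this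
  · have a := hinj _ _ (by omega) (by omega) h1
    have b := hinj _ _ (by omega) (by omega) h2
    omega

lemma pathEdges_getD (l : List V) (d : V) (i : ℕ) (hi : i < l.length - 1) :
    (pathEdges l).getD i s(d, d) = s(l.getD i d, l.getD (i+1) d) := by
  have h1 : i < (pathEdges l).length := by rw [pathEdges_length]; omega
  rw [List.getD_eq_getElem _ _ h1, pathEdges_getElem,
    List.getD_eq_getElem _ _ (by omega), List.getD_eq_getElem _ _ (by omega)]

lemma pathEdges_getD_mem (l : List V) (d : V) (i : ℕ) (hi : i < l.length - 1) :
    (pathEdges l).getD i s(d, d) ∈ pathEdges l := by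
  have h1 : i < (pathEdges l).length := by rw [pathEdges_length]; omega
  rw [List.getD_eq_getElem _ _ h1]
  exact List.getElem_mem h1

lemma list_mem_iff_getD {α : Type*} (E : List α) (d : α) (e : α) :
    e ∈ E ↔ ∃ i, i < E.length ∧ E.getD i d = e := by
  rw [List.mem_iff_getElem]
  constructor
  · rintro ⟨i, h, rfl⟩; exact ⟨i, h, List.getD_eq_getElem _ _ h⟩
  · rintro ⟨i, h, rfl⟩; exact ⟨i, h, (List.getD_eq_getElem _ _ h).symm⟩

lemma countP_of_parity {α : Type*} (p : α → Bool) :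
    ∀ (E : List α) (r : ℕ), r ≤ 1 →
      (∀ i (hi : i < E.length), p E[i] = true ↔ i % 2 = r) →
      E.countP p = (E.length + (1 - r)) / 2 := by
  intro E
  induction E with
  | nil => intro r hr _; simp; omega
  | cons a t ih =>
    intro r hr h
    have ha : p a = true ↔ r = 0 := by
      have := h 0 (by simp); simp at this; exact this.trans (by omega)
    have ht := ih (1 - r) (by omega) (fun i hi => by
      have := h (i+1) (by simp; omega)
      simp at this ⊢; rw [this]; omega)
    rw [List.countP_cons, ht]
    by_cases hpa : p a = true
    · have hr0 : r = 0 := ha.mp hpa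
      subst hr0; rw [if_pos hpa]; simp only [List.length_cons]; omega
    · have hr1 : r = 1 := by
        rcases Nat.lt_or_ge r 1 with h'|h'
        · exfalso; exact hpa (ha.mpr (by omega))
        · omega
      subst hr1; rw [if_neg hpa]; simp only [List.length_cons]; omega

end Aux

/-- The Augment primal update: given plus-nodes `u, v` in two vertex-disjoint
alternating trees, joined to their (distinct, unmatched) roots by even-length
alternating paths starting with matched edges, and a non-matching edge `uv`, the
concatenation `reverse(P_u), (u,v), P_v` is an augmenting path and augmenting along
it produces a matching of size `|M| + 1` covering both roots. -/
theorem augment_update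
    {V : Type*} [DecidableEq V]
    (Eg : Finset (Sym2 V)) (hEg : ∀ e ∈ Eg, ¬ e.IsDiag)
    (M : Finset (Sym2 V)) (hM : IsMatchingS M) (hME : M ⊆ Eg)
    (u v ru rv : V) (Pu Pv : List V)
    (hPu : IsAltPath Eg M true Pu) (hPuh : Pu.head? = some u)
    (hPul : Pu.getLast? = some ru) (hPue : Even (Pu.length - 1))
    (hPv : IsAltPath Eg M true Pv) (hPvh : Pv.head? = some v)
    (hPvl : Pv.getLast? = some rv) (hPve : Even (Pv.length - 1))
    -- the two trees (paths) are vertex-disjoint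
    (hdisj : ∀ x ∈ Pu, x ∉ Pv)
    -- the roots are unmatched and distinct
    (hru : ∀ e ∈ M, ru ∉ e) (hrv : ∀ e ∈ M, rv ∉ e) (hroots : ru ≠ rv)
    -- `uv` is an edge of `G` not in `M`
    (huv : s(u, v) ∈ Eg) (huvM : s(u, v) ∉ M) (hune : u ≠ v) :
    (fun (q : List V) (M' : Finset (Sym2 V)) =>
      -- `q` is a simple augmenting path: its edges alternate starting and ending
      -- with non-matching edges
      q.Nodup ∧
      (∀ e ∈ pathEdges q, e ∈ Eg) ∧
      (∀ i (hi : i < (pathEdges q).length), ((pathEdges q)[i]'hi ∈ M ↔ Odd i)) ∧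
      -- augmenting along `q` gives a matching one larger, covering both roots
      IsMatchingS M' ∧ M'.card = M.card + 1 ∧
      (∃ e ∈ M', ru ∈ e) ∧ (∃ e ∈ M', rv ∈ e))
    (Pu.reverse ++ Pv)
    ((M \ (pathEdges (Pu.reverse ++ Pv)).toFinset) ∪
      ((pathEdges (Pu.reverse ++ Pv)).toFinset \ M)) := by

  obtain ⟨hPuN, hPuE, hPuM⟩ := hPu
  obtain ⟨hPvN, hPvE, hPvM⟩ := hPv
  have hPuNe : Pu ≠ [] := by intro h; rw [h] at hPuh; simp at hPuh
  have hPvNe : Pv ≠ [] := by intro h; rw [h] at hPvh; simp at hPvh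
  set n := Pu.length - 1 with hn
  set m := Pv.length - 1 with hm
  have hPuL : Pu.length = n + 1 := by
    have := List.length_pos_iff.mpr hPuNe; omega
  have hPvL : Pv.length = m + 1 := by
    have := List.length_pos_iff.mpr hPvNe; omega
  have hne : n % 2 = 0 := Nat.even_iff.mp hPue
  have hme : m % 2 = 0 := Nat.even_iff.mp hPve
  set q := Pu.reverse ++ Pv with hq
  have hqL : q.length = n + m + 2 := by
    rw [hq, List.length_append, List.length_reverse, hPuL, hPvL]; omega
  have hEL : (pathEdges q).length = n + m + 1 := by rw [pathEdges_length, hqL]; omega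
  -- vertices of q via getD
  have hqu : ∀ i, i ≤ n → q.getD i u = Pu.getD (n - i) u := by
    intro i hi
    rw [List.getD_eq_getElem _ _ (by omega), List.getD_eq_getElem _ _ (by omega)]
    simp only [hq]
    rw [List.getElem_append_left (by rw [List.length_reverse, hPuL]; omega)]
    rw [List.getElem_reverse]
  have hqv : ∀ j, j ≤ m → q.getD (n + 1 + j) u = Pv.getD j u := by
    intro j hj
    rw [List.getD_eq_getElem _ _ (by omega), List.getD_eq_getElem _ _ (by omega)]
    simp only [hq]
    rw [List.getElem_append_right (by rw [List.length_reverse, hPuL]; omega)]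
    congr 1
    rw [List.length_reverse, hPuL]
    omega
  -- endpoints
  have hPu0 : Pu.getD 0 u = u := by
    rw [List.getD_eq_getElem _ _ (by omega), List.getElem_zero]
    rw [List.head?_eq_head hPuNe] at hPuh
    exact (Option.some_inj.mp hPuh)
  have hPv0 : Pv.getD 0 u = v := by
    rw [List.getD_eq_getElem _ _ (by omega), List.getElem_zero]
    rw [List.head?_eq_head hPvNe] at hPvh
    exact (Option.some_inj.mp hPvh)
  have hPun : Pu.getD n u = ru := by
    rw [List.getD_eq_getElem _ _ (by omega)]
    rw [List.getLast?_eq_getLast hPuNe, List.getLast_eq_getElem] at hPul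
    have := Option.some_inj.mp hPul
    rw [← this]
  have hPvm : Pv.getD m u = rv := by
    rw [List.getD_eq_getElem _ _ (by omega)]
    rw [List.getLast?_eq_getLast hPvNe, List.getLast_eq_getElem] at hPvl
    have := Option.some_inj.mp hPvl
    rw [← this]
  have hq0 : q.getD 0 u = ru := by rw [hqu 0 (by omega), Nat.sub_zero, hPun]
  have hqlast : q.getD (n + m + 1) u = rv := by
    rw [show n + m + 1 = n + 1 + m by omega, hqv m le_rfl, hPvm]
  -- nodup of q
  have hqN : q.Nodup := by
    rw [hq, List.nodup_append]
    exact ⟨List.nodup_reverse.mpr hPuN, hPvN,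
      fun x hx b hb hxb => hdisj x (List.mem_reverse.mp hx) (hxb ▸ hb)⟩
  have hqinj : ∀ i j, i < q.length → j < q.length → q.getD i u = q.getD j u → i = j := by
    intro i j hi hj h
    rw [List.getD_eq_getElem _ _ hi, List.getD_eq_getElem _ _ hj] at h
    exact (List.Nodup.getElem_inj_iff hqN).mp h
  -- alternation for Pu, Pv in getD form
  have hPuM' : ∀ i, i < n → ((pathEdges Pu).getD i s(u,u) ∈ M ↔ i % 2 = 0) := by
    intro i hi
    have h1 : i < (pathEdges Pu).length := by rw [pathEdges_length, hPuL]; omega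
    rw [List.getD_eq_getElem _ _ h1]
    rw [hPuM i h1]
    simp [Nat.even_iff]
  have hPvM' : ∀ i, i < m → ((pathEdges Pv).getD i s(u,u) ∈ M ↔ i % 2 = 0) := by
    intro i hi
    have h1 : i < (pathEdges Pv).length := by rw [pathEdges_length, hPvL]; omega
    rw [List.getD_eq_getElem _ _ h1]
    rw [hPvM i h1]
    simp [Nat.even_iff]
  -- main edge classification
  have key : ∀ i, i < n + m + 1 →
      ((pathEdges q).getD i s(u,u) ∈ Eg ∧
       ((pathEdges q).getD i s(u,u) ∈ M ↔ i % 2 = 1)) := by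
    intro i hi
    rw [pathEdges_getD q u i (by omega)]
    rcases lt_trichotomy i n with hlt | heq | hgt
    · rw [hqu i (by omega), hqu (i+1) (by omega)]
      rw [show n - i = (n - 1 - i) + 1 by omega, show n - (i+1) = n - 1 - i by omega]
      rw [Sym2.eq_swap]
      rw [← pathEdges_getD Pu u (n-1-i) (by omega)]
      constructor
      · exact hPuE _ (pathEdges_getD_mem Pu u (n-1-i) (by omega))
      · rw [hPuM' (n-1-i) (by omega)]; omega
    · subst heq
      rw [hqu n le_rfl, Nat.sub_self, hPu0,
        show n + 1 = n + 1 + 0 by omega, hqv 0 (by omega), hPv0]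
      refine ⟨huv, ?_⟩
      simp [huvM]
      omega
    · obtain ⟨j, rfl⟩ : ∃ j, i = n + 1 + j := ⟨i - n - 1, by omega⟩
      rw [hqv j (by omega), show n + 1 + j + 1 = n + 1 + (j + 1) by omega,
        hqv (j+1) (by omega)]
      rw [← pathEdges_getD Pv u j (by omega)]
      constructor
      · exact hPvE _ (pathEdges_getD_mem Pv u j (by omega))
      · rw [hPvM' j (by omega)]; omega
  -- matched-edge incidence for interior vertices
  have hinc : ∀ j, 0 < j → j < n + m + 1 →
      ∃ k, k < n + m + 1 ∧ k % 2 = 1 ∧ q.getD j u ∈ (pathEdges q).getD k s(u,u) := by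
    intro j hj1 hj2
    by_cases hjo : j % 2 = 1
    · refine ⟨j, hj2, hjo, ?_⟩
      rw [pathEdges_getD q u j (by omega)]
      exact Sym2.mem_mk_left _ _
    · refine ⟨j - 1, by omega, by omega, ?_⟩
      rw [pathEdges_getD q u (j-1) (by omega), show j - 1 + 1 = j by omega]
      exact Sym2.mem_mk_right _ _
  set P := (pathEdges q).toFinset with hP
  have hmemP : ∀ e, e ∈ P ↔ ∃ i, i < n + m + 1 ∧ (pathEdges q).getD i s(u,u) = e := by
    intro e
    rw [hP, List.mem_toFinset, list_mem_iff_getD _ s(u,u), hEL]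
  -- cross lemma: an edge of M not on the path shares no vertex with a path edge
  have hcross : ∀ e, e ∈ M → e ∉ P → ∀ f, f ∈ P → ∀ x, x ∈ e → x ∉ f := by
    intro e heM heP f hfP x hxe hxf
    obtain ⟨i, hi, rfl⟩ := (hmemP f).mp hfP
    by_cases hfm : (pathEdges q).getD i s(u,u) ∈ M
    · have hef : e ≠ (pathEdges q).getD i s(u,u) := by
        intro h; rw [h] at heP; exact heP hfP
      exact hM.2 e heM _ hfm hef x hxe hxf
    · rw [pathEdges_getD q u i (by omega)] at hxf
      rcases Sym2.mem_iff.mp hxf with hx | hx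
      · -- x = q.getD i u
        rcases Nat.eq_zero_or_pos i with h0 | hpos
        · subst h0; rw [hq0] at hx; exact hru e heM (hx ▸ hxe)
        · obtain ⟨k, hk1, hk2, hk3⟩ := hinc i hpos (by omega)
          have hkM : (pathEdges q).getD k s(u,u) ∈ M := (key k hk1).2.mpr hk2
          have hkP : (pathEdges q).getD k s(u,u) ∈ P := by
            rw [hP, List.mem_toFinset]
            exact pathEdges_getD_mem q u k (by omega)
          have hek : e ≠ (pathEdges q).getD k s(u,u) := by
            intro h; rw [h] at heP; exact heP hkP
          exact hM.2 e heM _ hkM hek x hxe (hx ▸ hk3)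
      · -- x = q.getD (i+1) u
        rcases Nat.lt_or_ge (i+1) (n+m+1) with hlt | hge
        · obtain ⟨k, hk1, hk2, hk3⟩ := hinc (i+1) (by omega) hlt
          have hkM : (pathEdges q).getD k s(u,u) ∈ M := (key k hk1).2.mpr hk2
          have hkP : (pathEdges q).getD k s(u,u) ∈ P := by
            rw [hP, List.mem_toFinset]
            exact pathEdges_getD_mem q u k (by omega)
          have hek : e ≠ (pathEdges q).getD k s(u,u) := by
            intro h; rw [h] at heP; exact heP hkP
          exact hM.2 e heM _ hkM hek x hxe (hx ▸ hk3)
        · have : i + 1 = n + m + 1 := by omega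
          rw [this, hqlast] at hx
          exact hrv e heM (hx ▸ hxe)
  have hmemM' : ∀ e, e ∈ (M \ P) ∪ (P \ M) ↔ (e ∈ M ∧ e ∉ P) ∨ (e ∈ P ∧ e ∉ M) := by
    intro e; simp [Finset.mem_union, Finset.mem_sdiff]
  refine ⟨hqN, ?_, ?_, ⟨?_, ?_⟩, ?_, ?_, ?_⟩
  · -- edges in Eg
    intro e he
    obtain ⟨i, hi, rfl⟩ := (list_mem_iff_getD _ s(u,u) e).mp he
    rw [hEL] at hi
    exact (key i hi).1
  · -- alternation
    intro i hi
    have hi' : i < n + m + 1 := by rw [hEL] at hi; exact hi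
    rw [show (pathEdges q)[i]'hi = (pathEdges q).getD i s(u,u) from
      (List.getD_eq_getElem _ _ hi).symm, Nat.odd_iff]
    exact (key i hi').2
  · -- M' non-diag
    intro e he
    rcases (hmemM' e).mp he with ⟨h1, _⟩ | ⟨h1, _⟩
    · exact hM.1 e h1
    · obtain ⟨i, hi, rfl⟩ := (hmemP e).mp h1
      exact hEg _ (key i hi).1
  · -- M' disjointness
    intro e he f hf hef x hxe hxf
    rcases (hmemM' e).mp he with ⟨heM, heP⟩ | ⟨heP, heM⟩ <;>
      rcases (hmemM' f).mp hf with ⟨hfM, hfP⟩ | ⟨hfP, hfM⟩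
    · exact hM.2 e heM f hfM hef x hxe hxf
    · exact hcross e heM heP f hfP x hxe hxf
    · exact hcross f hfM hfP e heP x hxf hxe
    · -- both unmatched path edges
      obtain ⟨i, hi, rfl⟩ := (hmemP e).mp heP
      obtain ⟨i', hi', rfl⟩ := (hmemP f).mp hfP
      have hie : ¬ i % 2 = 1 := fun h => heM ((key i hi).2.mpr h)
      have hie' : ¬ i' % 2 = 1 := fun h => hfM ((key i' hi').2.mpr h)
      have hii : i ≠ i' := fun h => hef (by rw [h])
      rw [pathEdges_getD q u i (by omega)] at hxe
      rw [pathEdges_getD q u i' (by omega)] at hxf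
      rcases Sym2.mem_iff.mp hxe with h1 | h1 <;>
        rcases Sym2.mem_iff.mp hxf with h2 | h2 <;>
      · have := hqinj _ _ (by omega) (by omega) (h1.symm.trans h2)
        omega
  · -- cardinality
    have hPnd : (pathEdges q).Nodup := pathEdges_nodup q hqN
    have hPcard : P.card = n + m + 1 := by
      rw [hP, List.toFinset_card_of_nodup hPnd, hEL]
    have hMPcard : (M ∩ P).card = (n + m + 1) / 2 := by
      have hset : M ∩ P = ((pathEdges q).filter (fun e => e ∈ M)).toFinset := by
        ext e
        simp only [hP, Finset.mem_inter, List.mem_toFinset, List.mem_filter,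
          decide_eq_true_eq]
        tauto
      rw [hset, List.toFinset_card_of_nodup (hPnd.filter _),
        ← List.countP_eq_length_filter]
      have hcp := countP_of_parity (fun e => decide (e ∈ M)) (pathEdges q) 1 le_rfl (by
        intro i hi
        have hi' : i < n + m + 1 := by rw [hEL] at hi; exact hi
        rw [show (pathEdges q)[i] = (pathEdges q).getD i s(u,u) from
          (List.getD_eq_getElem _ _ hi).symm]
        simp only [decide_eq_true_eq]
        exact (key i hi').2)
      rw [hcp, hEL]
    have h1 : (M ∩ P).card + (M \ P).card = M.card := Finset.card_inter_add_card_sdiff M P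
    have h2 : (P ∩ M).card + (P \ M).card = P.card := Finset.card_inter_add_card_sdiff P M
    rw [Finset.inter_comm] at h2
    have hd : Disjoint (M \ P) (P \ M) := by
      rw [Finset.disjoint_left]
      intro a ha hb
      simp only [Finset.mem_sdiff] at ha hb
      exact hb.2 ha.1
    rw [Finset.card_union_of_disjoint hd]
    omega
  · -- ru covered
    refine ⟨(pathEdges q).getD 0 s(u,u), ?_, ?_⟩
    · rw [hmemM']
      right
      refine ⟨(hmemP _).mpr ⟨0, by omega, rfl⟩, ?_⟩
      intro h
      have := (key 0 (by omega)).2.mp h; omega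
    · rw [pathEdges_getD q u 0 (by omega), hq0]
      exact Sym2.mem_mk_left _ _
  · -- rv covered
    refine ⟨(pathEdges q).getD (n+m) s(u,u), ?_, ?_⟩
    · rw [hmemM']
      right
      refine ⟨(hmemP _).mpr ⟨n+m, by omega, rfl⟩, ?_⟩
      intro h
      have := (key (n+m) (by omega)).2.mp h; omega
    · rw [pathEdges_getD q u (n+m) (by omega)]
      rw [hqlast]
      exact Sym2.mem_mk_right _ _
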